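/- arXiv:2305.15704 — 4 statements merged into one kernel-verified Lean document; each statement's English description precedes it below -/
import Mathlib

section
/- Let N ≥ 1, R > 0, and γ_0,…,γ_{N−1} > 0. Define ρ_i = γ_i/γ_0, and η_0 = 1, η_i = ( ρ_i + √( ρ_i² + (4ρ_i/ρ_{i−1}) η_{i−1}² ) ) / 2 for 1 ≤ i ≤ N−1. Define ζ_N = γ_{N−1} R² / (4γ_0² η_{N−1}²) and, for i = N−1 down to 0, ζ_i = [ (2η_i/ρ_i) / ((2η_i/ρ_i) − 1) ] ζ_{i+1}. Define a_i = √(ζ_i − ζ_{i+1}) / √γ_i and b_i = √γ_i ζ_i / √(ζ_i − ζ_{i+1}) for i ∈ [0:N−1]. Then: (1) a_i b_i − a_{i+1} b_{i+1} − γ_i a_i² ≥ 0 for i ∈ [0:N−2]; (2) a_{N−1} b_{N−1} − γ_{N−1} a_{N−1}² ≥ ζ_N; and (3) Σ_{i=0}^{N−1} b_i² = R². -/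
open Finset

/-- Lemma 10, properties of the `ζ`, `a`, `b` parameters of the
proximal lower-bound construction.
With `ρ_i = γ_i/γ_0`, `η_0 = 1`, `η_i = (ρ_i + √(ρ_i² + (4ρ_i/ρ_{i-1}) η_{i-1}²))/2`,
`ζ_N = γ_{N-1} R² / (4 γ_0² η_{N-1}²)`,
`ζ_i = ((2η_i/ρ_i)/((2η_i/ρ_i) - 1)) ζ_{i+1}`,
`a_i = √(ζ_i - ζ_{i+1})/√γ_i`, and `b_i = √γ_i ζ_i / √(ζ_i - ζ_{i+1})`, one has
`a_i b_i - a_{i+1} b_{i+1} - γ_i a_i² ≥ 0` for `i ∈ [0:N-2]`,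
`a_{N-1} b_{N-1} - γ_{N-1} a_{N-1}² ≥ ζ_N`, and `Σ_{i<N} b_i² = R²`. -/
theorem zeta_ab_properties
    (N : ℕ) (hN : 1 ≤ N) (R : ℝ) (hR : 0 < R)
    (γ : ℕ → ℝ) (hγ : ∀ i, i < N → 0 < γ i)
    (η : ℕ → ℝ) (hη0 : η 0 = 1)
    (hη : ∀ i, 1 ≤ i → i + 1 ≤ N →
      η i = (γ i / γ 0 + Real.sqrt ((γ i / γ 0) ^ 2
        + 4 * (γ i / γ 0) / (γ (i - 1) / γ 0) * (η (i - 1)) ^ 2)) / 2)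
    (ζ : ℕ → ℝ)
    (hζN : ζ N = γ (N - 1) * R ^ 2 / (4 * (γ 0) ^ 2 * (η (N - 1)) ^ 2))
    (hζ : ∀ i, i < N →
      ζ i = (2 * η i / (γ i / γ 0)) / (2 * η i / (γ i / γ 0) - 1) * ζ (i + 1))
    (a b : ℕ → ℝ)
    (ha : ∀ i, i < N → a i = Real.sqrt (ζ i - ζ (i + 1)) / Real.sqrt (γ i))
    (hb : ∀ i, i < N → b i = Real.sqrt (γ i) * ζ i / Real.sqrt (ζ i - ζ (i + 1))) :
    (∀ i, i + 1 < N → 0 ≤ a i * b i - a (i + 1) * b (i + 1) - γ i * (a i) ^ 2) ∧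
    ζ N ≤ a (N - 1) * b (N - 1) - γ (N - 1) * (a (N - 1)) ^ 2 ∧
    ∑ i ∈ Finset.range N, (b i) ^ 2 = R ^ 2 := by
  have hγ0 : 0 < γ 0 := hγ 0 (by omega)
  -- η positivity and lower bound
  have hηpos : ∀ i, i < N → 0 < η i := by
    intro i hi
    rcases Nat.eq_zero_or_pos i with h0 | h1
    · rw [h0, hη0]; norm_num
    · have hγi : 0 < γ i / γ 0 := div_pos (hγ i hi) hγ0
      have hs := Real.sqrt_nonneg ((γ i / γ 0) ^ 2
        + 4 * (γ i / γ 0) / (γ (i - 1) / γ 0) * (η (i - 1)) ^ 2)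
      rw [hη i h1 (by omega)]
      linarith
  have hηlb : ∀ i, i < N → γ i / γ 0 < 2 * η i := by
    intro i hi
    rcases Nat.eq_zero_or_pos i with h0 | h1
    · rw [h0, hη0, div_self hγ0.ne']; norm_num
    · have hγi : 0 < γ i / γ 0 := div_pos (hγ i hi) hγ0
      have hγi' : 0 < γ (i-1) / γ 0 := div_pos (hγ (i-1) (by omega)) hγ0
      have harg : (γ i / γ 0) ^ 2 ≤ (γ i / γ 0) ^ 2
          + 4 * (γ i / γ 0) / (γ (i - 1) / γ 0) * (η (i - 1)) ^ 2 := by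
        have : 0 ≤ 4 * (γ i / γ 0) / (γ (i - 1) / γ 0) * (η (i - 1)) ^ 2 := by positivity
        linarith
      have hs : γ i / γ 0 ≤ Real.sqrt ((γ i / γ 0) ^ 2
          + 4 * (γ i / γ 0) / (γ (i - 1) / γ 0) * (η (i - 1)) ^ 2) := by
        calc γ i / γ 0 = Real.sqrt ((γ i / γ 0) ^ 2) := by
              rw [Real.sqrt_sq hγi.le]
          _ ≤ _ := Real.sqrt_le_sqrt harg
      rw [hη i h1 (by omega)]
      linarith
  -- quadratic identity for η, cleared of denominators
  have hquad : ∀ i, 1 ≤ i → i < N →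
      γ 0 * γ (i-1) * (η i)^2 = γ (i-1) * γ i * η i + γ 0 * γ i * (η (i-1))^2 := by
    intro i h1 hi
    have hγi : 0 < γ i / γ 0 := div_pos (hγ i hi) hγ0
    have hγi' : 0 < γ (i-1) / γ 0 := div_pos (hγ (i-1) (by omega)) hγ0
    have harg : 0 ≤ (γ i / γ 0) ^ 2
        + 4 * (γ i / γ 0) / (γ (i - 1) / γ 0) * (η (i - 1)) ^ 2 := by positivity
    have key : 2 * η i - γ i / γ 0 = Real.sqrt ((γ i / γ 0) ^ 2
        + 4 * (γ i / γ 0) / (γ (i - 1) / γ 0) * (η (i - 1)) ^ 2) := by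
      rw [hη i h1 (by omega)]; ring
    have key2 : (2 * η i - γ i / γ 0)^2 = (γ i / γ 0) ^ 2
        + 4 * (γ i / γ 0) / (γ (i - 1) / γ 0) * (η (i - 1)) ^ 2 := by
      rw [key, Real.sq_sqrt harg]
    have hγ0ne : γ 0 ≠ 0 := hγ0.ne'
    have hγi1ne : γ (i-1) ≠ 0 := (hγ (i-1) (by omega)).ne'
    field_simp at key2
    have key3 : (2 * η i * γ 0 - γ i)^2 * γ (i-1)
        = γ i^2 * γ (i-1) + 4 * γ i * η (i-1)^2 * γ 0^2 :=
      mul_right_cancel₀ (pow_ne_zero 2 hγ0ne) (by linear_combination γ 0 ^ 2 * key2)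
    refine mul_left_cancel₀ hγ0ne ?_
    linear_combination key3 / 4
  -- cleared form of the ζ recursion
  have hdiff' : ∀ i, i < N → 2 * γ 0 * η i * (ζ i - ζ (i+1)) = γ i * ζ i := by
    intro i hi
    have hγi : 0 < γ i / γ 0 := div_pos (hγ i hi) hγ0
    have ht : 1 < 2 * η i / (γ i / γ 0) := (one_lt_div hγi).mpr (hηlb i hi)
    have ht1 : 2 * η i / (γ i / γ 0) - 1 ≠ 0 := ne_of_gt (by linarith)
    have e := hζ i hi
    have hγ0ne : γ 0 ≠ 0 := hγ0.ne'
    have hγine : γ i ≠ 0 := (hγ i hi).ne'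
    have hlt : γ i < 2 * η i * γ 0 := by
      have h3 := (div_lt_iff₀ hγ0).mp (hηlb i hi)
      linarith
    have h2 : 2 * η i * γ 0 - γ i ≠ 0 := by linarith
    field_simp at e
    linear_combination e
  -- ζ positivity
  have hζposN : 0 < ζ N := by
    rw [hζN]
    have h1 : 0 < η (N-1) := hηpos (N-1) (by omega)
    have h2 : 0 < γ (N-1) := hγ (N-1) (by omega)
    positivity
  have hζposAux : ∀ k, k ≤ N → 0 < ζ (N - k) := by
    intro k
    induction k with
    | zero => intro _; simpa using hζposN
    | succ k ih =>
      intro hk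
      have hi : N - (k+1) < N := by omega
      have hnext : 0 < ζ (N - (k+1) + 1) := by
        have : N - (k+1) + 1 = N - k := by omega
        rw [this]; exact ih (by omega)
      set i := N - (k+1) with hidef
      have hγi : 0 < γ i / γ 0 := div_pos (hγ i hi) hγ0
      have ht : 1 < 2 * η i / (γ i / γ 0) := (one_lt_div hγi).mpr (hηlb i hi)
      rw [hζ i hi]
      have : 0 < (2 * η i / (γ i / γ 0)) / (2 * η i / (γ i / γ 0) - 1) := by
        apply div_pos <;> linarith
      exact mul_pos this hnext
  have hζpos : ∀ i, i ≤ N → 0 < ζ i := by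
    intro i hi
    have := hζposAux (N - i) (by omega)
    rwa [Nat.sub_sub_self hi] at this
  -- positivity of differences
  have hdpos : ∀ i, i < N → 0 < ζ i - ζ (i+1) := by
    intro i hi
    have h := hdiff' i hi
    have h1 : 0 < γ i * ζ i := mul_pos (hγ i hi) (hζpos i (by omega))
    have h2 : 0 < 2 * γ 0 * η i := by
      have := hηpos i hi; positivity
    nlinarith
  -- a·b = ζ
  have hab : ∀ i, i < N → a i * b i = ζ i := by
    intro i hi
    have hd := hdpos i hi
    have hγi := hγ i hi
    rw [ha i hi, hb i hi]
    have h1 : Real.sqrt (ζ i - ζ (i+1)) ≠ 0 := ne_of_gt (Real.sqrt_pos.mpr hd)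
    have h2 : Real.sqrt (γ i) ≠ 0 := ne_of_gt (Real.sqrt_pos.mpr hγi)
    field_simp
  -- γ a² = difference
  have hasq : ∀ i, i < N → γ i * (a i)^2 = ζ i - ζ (i+1) := by
    intro i hi
    have hd := hdpos i hi
    have hγi := hγ i hi
    rw [ha i hi, div_pow, Real.sq_sqrt hd.le, Real.sq_sqrt hγi.le]
    field_simp
  -- b² = 2 γ₀ η ζ
  have hbsq : ∀ i, i < N → (b i)^2 = 2 * γ 0 * η i * ζ i := by
    intro i hi
    have hd := hdpos i hi
    have hγi := hγ i hi
    rw [hb i hi, div_pow, mul_pow, Real.sq_sqrt hγi.le, Real.sq_sqrt hd.le,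
      div_eq_iff hd.ne']
    linear_combination (-ζ i) * hdiff' i hi
  -- key sum identity
  have hsum : ∀ k, k + 1 ≤ N →
      ∑ i ∈ Finset.range (k+1), η i * ζ i = 2 * γ 0 * (η k)^2 * ζ (k+1) / γ k := by
    intro k
    induction k with
    | zero =>
      intro _
      rw [Finset.sum_range_one, hη0]
      have h := hdiff' 0 (by omega)
      rw [hη0] at h
      rw [eq_div_iff hγ0.ne']
      linear_combination h
    | succ k ih =>
      intro hk
      have hks : k + 1 < N := by omega
      rw [Finset.sum_range_succ, ih (by omega)]
      have hγk : γ k ≠ 0 := (hγ k (by omega)).ne'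
      have hγk1 : γ (k+1) ≠ 0 := (hγ (k+1) hks).ne'
      have hq := hquad (k+1) (by omega) hks
      simp only [Nat.add_sub_cancel] at hq
      have hd := hdiff' (k+1) hks
      rw [div_add' _ _ _ hγk, div_eq_div_iff hγk hγk1]
      linear_combination (-2 * ζ (k+1)) * hq + γ k * η (k+1) * hd
  refine ⟨?_, ?_, ?_⟩
  · intro i hi
    have e1 := hab i (by omega)
    have e2 := hab (i+1) (by omega)
    have e3 := hasq i (by omega)
    nlinarith [hγ i (by omega), sq_nonneg (a i)]
  · have hN1 : N - 1 < N := by omega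
    have hs : N - 1 + 1 = N := by omega
    have e1 := hab (N-1) hN1
    have e3 := hasq (N-1) hN1
    rw [hs] at e3
    nlinarith [hγ (N-1) hN1, sq_nonneg (a (N-1))]
  · have hrw : ∀ i ∈ Finset.range N, (b i)^2 = 2 * γ 0 * (η i * ζ i) := by
      intro i hi
      rw [hbsq i (Finset.mem_range.mp hi)]; ring
    rw [Finset.sum_congr rfl hrw, ← Finset.mul_sum]
    have hs : N - 1 + 1 = N := by omega
    have := hsum (N-1) (by omega)
    rw [hs] at this
    rw [this, hζN]
    have hγN : γ (N-1) ≠ 0 := (hγ (N-1) (by omega)).ne'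
    have hηN : η (N-1) ≠ 0 := (hηpos (N-1) (by omega)).ne'
    field_simp
    ring
end

section
/- Let N ≥ 1, L > 0, let f be L-smooth convex on ℝ^d and h closed, proper, convex on ℝ^d, and let θ, γ be the OptISTA coefficients. Define α_{i+1,i} = 1 + (2θ_i − 1)/θ_{i+1} and, for j ∈ [0:i−1], α_{i+1,j} = α_{j+1,j} + Σ_{k=j+1}^{i} ( 2θ_j/θ_{k+1} − α_{k,j}/θ_{k+1} ). Consider the fixed-step first-order sequences defined from x_0 = y_0 by y_{i+1} = x_0 − Σ_{j=0}^{i} (γ_j/L)∇f(x_j) − Σ_{j=0}^{i} (γ_j/L) h'(y_{j+1}) and x_{i+1} = x_0 − Σ_{j=0}^{i} (α_{i+1,j}/L)∇f(x_j) − Σ_{j=0}^{i} (α_{i+1,j}/L) h'(y_{j+1}) for i ∈ [0:N−1], where h'(y_{j+1}) is the subgradient of h at y_{j+1} implicitly defined by the proximal step y_{j+1} = prox_{(γ_j/L)h}( y_j − (γ_j/L)∇f(x_j) ). Then the sequences (x_i)_{i=1}^N and (y_i)_{i=1}^N so defined coincide with the x-iterates and y-iterates of OptISTA started at the same initial point.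 -/
open Finset

noncomputable section

/-- `ℝ^d` as a Euclidean space. -/
abbrev E (d : ℕ) := EuclideanSpace ℝ (Fin d)

/-- `f : ℝ^d → ℝ` is `L`-smooth convex: convex, differentiable, with `L`-Lipschitz gradient. -/
def LSmoothConvex {d : ℕ} (L : ℝ) (f : E d → ℝ) : Prop :=
  ConvexOn ℝ Set.univ f ∧ Differentiable ℝ f ∧
    ∀ x y : E d, ‖gradient f x - gradient f y‖ ≤ L * ‖x - y‖

/-- `h : ℝ^d → ℝ ∪ {∞}` is closed (lower semicontinuous), proper, and convex. -/
def ClosedProperConvexER {d : ℕ} (h : E d → EReal) : Prop :=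
  LowerSemicontinuous h ∧ (∃ x, h x ≠ ⊤) ∧ (∀ x, h x ≠ ⊥) ∧
    ∀ x y : E d, ∀ a b : ℝ, 0 ≤ a → 0 ≤ b → a + b = 1 →
      h (a • x + b • y) ≤ (a : EReal) * h x + (b : EReal) * h y

/-- `p = prox_{γ h}(x)`, i.e. `p` minimizes `z ↦ h z + ‖z - x‖² / (2γ)`. -/
def IsProx {d : ℕ} (h : E d → EReal) (γ : ℝ) (x p : E d) : Prop :=
  ∀ w : E d, h p + ((‖p - x‖ ^ 2 / (2 * γ) : ℝ) : EReal)
    ≤ h w + ((‖w - x‖ ^ 2 / (2 * γ) : ℝ) : EReal)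

lemma midpoint_norm_sq_lt {d : ℕ} (u v : E d) (huv : u ≠ v) :
    ‖(1/2:ℝ) • u + (1/2:ℝ) • v‖^2 < ‖u‖^2/2 + ‖v‖^2/2 := by
  have hpar := parallelogram_law_with_norm ℝ u v
  have h1 : ‖(1/2:ℝ) • u + (1/2:ℝ) • v‖ = ‖u + v‖/2 := by
    rw [← smul_add, norm_smul]
    simp
    ring
  have h2 : 0 < ‖u - v‖ := by
    simpa [sub_eq_zero] using huv
  rw [h1]
  nlinarith [norm_nonneg (u+v), norm_nonneg u, norm_nonneg v]

lemma isProx_unique {d : ℕ} (h : E d → EReal) (hh : ClosedProperConvexER h)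
    (γ : ℝ) (hγ : 0 < γ) (x p q : E d)
    (hp : IsProx h γ x p) (hq : IsProx h γ x q) : p = q := by
  by_contra hne
  obtain ⟨-, ⟨w0, hw0⟩, hbot, hconv⟩ := hh
  have hw0lt : h w0 + ((‖w0 - x‖ ^ 2 / (2 * γ) : ℝ) : EReal) < ⊤ := by
    apply EReal.add_lt_top hw0 (EReal.coe_ne_top _)
  have hptop : h p ≠ ⊤ := by
    intro hT
    have := lt_of_le_of_lt (hp w0) hw0lt
    rw [hT, EReal.top_add_coe] at this
    exact absurd this (lt_irrefl _)
  have hqtop : h q ≠ ⊤ := by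
    intro hT
    have := lt_of_le_of_lt (hq w0) hw0lt
    rw [hT, EReal.top_add_coe] at this
    exact absurd this (lt_irrefl _)
  set rp := (h p).toReal with hrp
  set rq := (h q).toReal with hrq
  have hpe : h p = (rp : EReal) := (EReal.coe_toReal hptop (hbot p)).symm
  have hqe : h q = (rq : EReal) := (EReal.coe_toReal hqtop (hbot q)).symm
  set Cp := ‖p - x‖ ^ 2 / (2 * γ) with hCp
  set Cq := ‖q - x‖ ^ 2 / (2 * γ) with hCq
  set m := (1/2:ℝ) • p + (1/2:ℝ) • q with hm
  set Cm := ‖m - x‖ ^ 2 / (2 * γ) with hCm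
  -- equality of values
  have e1 : rp + Cp ≤ rq + Cq := by
    have := hp q
    rw [hpe, hqe, ← EReal.coe_add, ← EReal.coe_add] at this
    exact_mod_cast this
  have e2 : rq + Cq ≤ rp + Cp := by
    have := hq p
    rw [hpe, hqe, ← EReal.coe_add, ← EReal.coe_add] at this
    exact_mod_cast this
  -- strict midpoint inequality
  have hmx : m - x = (1/2:ℝ) • (p - x) + (1/2:ℝ) • (q - x) := by
    rw [hm]; module
  have hmid : Cm < Cp/2 + Cq/2 := by
    have key := midpoint_norm_sq_lt (p - x) (q - x) (by
      intro hpq; apply hne; exact sub_left_injective hpq)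
    rw [← hmx] at key
    have h2γ : 0 < 2 * γ := by linarith
    calc Cm = ‖m - x‖ ^ 2 / (2 * γ) := hCm
      _ < (‖p - x‖ ^ 2 / 2 + ‖q - x‖ ^ 2 / 2) / (2 * γ) := by gcongr
      _ = Cp / 2 + Cq / 2 := by rw [hCp, hCq]; ring
  -- convexity
  have hconv2 : h m ≤ ((rp/2 + rq/2 : ℝ) : EReal) := by
    have := hconv p q (1/2) (1/2) (by norm_num) (by norm_num) (by norm_num)
    rw [hpe, hqe] at this
    calc h m ≤ ((1/2:ℝ) : EReal) * (rp : EReal) + ((1/2:ℝ) : EReal) * (rq : EReal) := this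
      _ = ((rp/2 + rq/2 : ℝ) : EReal) := by
          rw [← EReal.coe_mul, ← EReal.coe_mul, ← EReal.coe_add]
          congr 1
          ring
  have hfin : ((rp + Cp : ℝ) : EReal) ≤ ((rp/2 + rq/2 + Cm : ℝ) : EReal) := by
    calc ((rp + Cp : ℝ) : EReal) = h p + (Cp : EReal) := by rw [hpe, EReal.coe_add]
      _ ≤ h m + (Cm : EReal) := hp m
      _ ≤ ((rp/2 + rq/2 : ℝ) : EReal) + (Cm : EReal) := by
          exact add_le_add hconv2 le_rfl
      _ = ((rp/2 + rq/2 + Cm : ℝ) : EReal) := by rw [← EReal.coe_add]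
  have hfin' : rp + Cp ≤ rp/2 + rq/2 + Cm := by exact_mod_cast hfin
  linarith

set_option maxHeartbeats 2000000 in
/-- Lemma 10, equivalence of the fixed-step span form and OptISTA.
With the OptISTA coefficients `θ, γ` and stepsizes `α` defined by
`α_{i+1,i} = 1 + (2θ_i - 1)/θ_{i+1}` and, for `j < i`,
`α_{i+1,j} = α_{j+1,j} + Σ_{k=j+1}^{i} (2θ_j/θ_{k+1} - α_{k,j}/θ_{k+1})`,
the fixed-step sequences
`y_{i+1} = x_0 - Σ_{j≤i} (γ_j/L) ∇f(x_j) - Σ_{j≤i} (γ_j/L) h'(y_{j+1})`,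
`x_{i+1} = x_0 - Σ_{j≤i} (α_{i+1,j}/L) ∇f(x_j) - Σ_{j≤i} (α_{i+1,j}/L) h'(y_{j+1})`
(with `h'(y_{j+1})` the subgradient implicitly defined by the prox step)
coincide with the `x`- and `y`-iterates of OptISTA started at the same point. -/
theorem optista_span_form_equivalence
    (d N : ℕ) (hN : 1 ≤ N) (L : ℝ) (hL : 0 < L)
    (f : E d → ℝ) (hf : LSmoothConvex L f)
    (h : E d → EReal) (hh : ClosedProperConvexER h)
    (θ : ℕ → ℝ) (hθ0 : θ 0 = 1)
    (hθ : ∀ i, 1 ≤ i → i + 1 ≤ N → θ i = (1 + Real.sqrt (1 + 4 * θ (i - 1) ^ 2)) / 2)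
    (hθN : θ N = (1 + Real.sqrt (1 + 8 * θ (N - 1) ^ 2)) / 2)
    (γ : ℕ → ℝ)
    (hγ : ∀ i, i < N → γ i = 2 * θ i / θ N ^ 2 * (θ N ^ 2 - 2 * θ i ^ 2 + θ i))
    (α : ℕ → ℕ → ℝ)
    (hαdiag : ∀ i, i < N → α (i + 1) i = 1 + (2 * θ i - 1) / θ (i + 1))
    (hαrec : ∀ i j, j < i → i < N →
      α (i + 1) j = α (j + 1) j
        + ∑ k ∈ Finset.Icc (j + 1) i, (2 * θ j / θ (k + 1) - α k j / θ (k + 1)))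
    -- the fixed-step span-form sequences, with subgradients `hs (j+1)` of `h` at `y (j+1)`
    (x y hs : ℕ → E d)
    (hy0 : y 0 = x 0)
    (hyprox : ∀ i, i < N →
      IsProx h (γ i / L) (y i - (γ i / L) • gradient f (x i)) (y (i + 1)))
    (hhs : ∀ i, i < N →
      hs (i + 1) = (L / γ i) • (y i - (γ i / L) • gradient f (x i) - y (i + 1)))
    (hysum : ∀ i, i < N →
      y (i + 1) = x 0 - (∑ j ∈ Finset.range (i + 1), (γ j / L) • gradient f (x j))
        - ∑ j ∈ Finset.range (i + 1), (γ j / L) • hs (j + 1))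
    (hxsum : ∀ i, i < N →
      x (i + 1) = x 0 - (∑ j ∈ Finset.range (i + 1), (α (i + 1) j / L) • gradient f (x j))
        - ∑ j ∈ Finset.range (i + 1), (α (i + 1) j / L) • hs (j + 1))
    -- the OptISTA iterates started at the same point
    (xh yh zh : ℕ → E d)
    (hxh0 : xh 0 = x 0) (hyh0 : yh 0 = x 0) (hzh0 : zh 0 = x 0)
    (hyh : ∀ i, i < N →
      IsProx h (γ i / L) (yh i - (γ i / L) • gradient f (xh i)) (yh (i + 1)))
    (hzh : ∀ i, i < N → zh (i + 1) = xh i + (γ i)⁻¹ • (yh (i + 1) - yh i))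
    (hxh : ∀ i, i < N →
      xh (i + 1) = zh (i + 1) + ((θ i - 1) / θ (i + 1)) • (zh (i + 1) - zh i)
        + (θ i / θ (i + 1)) • (zh (i + 1) - xh i)) :
    ∀ k, k ≤ N → x k = xh k ∧ y k = yh k := by
  classical
  have hL' : L ≠ 0 := ne_of_gt hL
  -- ### θ facts
  have sqrt1 : ∀ c : ℝ, 0 ≤ c → 1 ≤ Real.sqrt (1 + c) := by
    intro c hc
    have : Real.sqrt 1 ≤ Real.sqrt (1 + c) := Real.sqrt_le_sqrt (by linarith)
    simpa using this
  have hθge1 : ∀ i, i ≤ N → 1 ≤ θ i := by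
    intro i hi
    rcases Nat.eq_zero_or_pos i with h0 | h1
    · simp [h0, hθ0]
    rcases eq_or_lt_of_le hi with hiN | hiN
    · rw [hiN, hθN]
      have := sqrt1 (8 * θ (N-1)^2) (by positivity)
      linarith
    · rw [hθ i h1 hiN]
      have := sqrt1 (4 * θ (i-1)^2) (by positivity)
      linarith
  have hθne : ∀ i, i ≤ N → θ i ≠ 0 := fun i hi => by
    have := hθge1 i hi; intro h0; rw [h0] at this; linarith
  have hθsq : ∀ i, 1 ≤ i → i + 1 ≤ N → θ i ^ 2 = θ i + θ (i-1) ^ 2 := by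
    intro i h1 h2
    have h := hθ i h1 h2
    have hs : Real.sqrt (1 + 4 * θ (i-1)^2) ^ 2 = 1 + 4 * θ (i-1)^2 :=
      Real.sq_sqrt (by positivity)
    rw [h]; nlinarith [hs]
  have hθNsq : θ N ^ 2 = θ N + 2 * θ (N-1) ^ 2 := by
    have hs : Real.sqrt (1 + 8 * θ (N-1)^2) ^ 2 = 1 + 8 * θ (N-1)^2 :=
      Real.sq_sqrt (by positivity)
    rw [hθN]; nlinarith [hs]
  have hstepθ : ∀ m, m + 1 ≤ N - 1 → θ m ≤ θ (m+1) := by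
    intro m hm
    have h1 : θ (m+1) ^ 2 = θ (m+1) + θ m ^ 2 := by
      have := hθsq (m+1) (by omega) (by omega)
      simpa using this
    have h2 : 1 ≤ θ m := hθge1 m (by omega)
    have h3 : 1 ≤ θ (m+1) := hθge1 (m+1) (by omega)
    nlinarith
  have hmono : ∀ j, j ≤ N - 1 → ∀ i, i ≤ j → θ i ≤ θ j := by
    intro j
    induction j with
    | zero =>
      intro _ i hi
      have : i = 0 := by omega
      simp [this]
    | succ m ih =>
      intro hj i hi
      rcases Nat.lt_or_ge i (m+1) with hlt | hge
      · have h1 := ih (by omega) i (by omega)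
        have h2 := hstepθ m hj
        linarith
      · have : i = m + 1 := by omega
        simp [this]
  have hγpos : ∀ i, i < N → 0 < γ i := by
    intro i hi
    have h1 : 1 ≤ θ i := hθge1 i (le_of_lt hi)
    have hN1 : 1 ≤ θ N := hθge1 N le_rfl
    have hmn : θ i ≤ θ (N-1) := hmono (N-1) le_rfl i (by omega)
    have h2 : 1 ≤ θ (N-1) := hθge1 (N-1) (by omega)
    rw [hγ i hi]
    have hpos : 0 < θ N ^ 2 - 2 * θ i ^ 2 + θ i := by nlinarith
    have hpos2 : 0 < 2 * θ i / θ N ^ 2 := by positivity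
    exact mul_pos hpos2 hpos
  have hγne : ∀ i, i < N → γ i ≠ 0 := fun i hi => ne_of_gt (hγpos i hi)
  -- ### α facts
  have hstepα : ∀ i j, j < i → i < N →
      α (i+1) j - α i j = (2 * θ j - α i j) / θ (i+1) := by
    intro i j hji hiN
    rcases eq_or_lt_of_le (Nat.succ_le_of_lt hji) with hji' | hji'
    · have hij : i = j + 1 := by omega
      subst hij
      have h1 := hαrec (j+1) j hji hiN
      rw [Finset.Icc_self, Finset.sum_singleton] at h1
      rw [h1]; ring
    · obtain ⟨m, rfl⟩ : ∃ m, i = m + 1 := ⟨i - 1, by omega⟩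
      have h1 := hαrec (m+1) j hji hiN
      have h2 := hαrec m j (by omega) (by omega)
      rw [Finset.sum_Icc_succ_top (by omega : j + 1 ≤ m + 1)] at h1
      rw [h1, h2]; ring
  -- ### the combined gradient/subgradient vector
  set g : ℕ → E d := fun j => gradient f (x j) + hs (j + 1) with hg
  have hx' : ∀ i, i ≤ N → x i = x 0 - ∑ j ∈ Finset.range i, (α i j / L) • g j := by
    intro i hi
    rcases i with _ | m
    · simp
    · have hm : m < N := by omega
      rw [hxsum m hm, sub_sub]
      congr 1
      rw [← Finset.sum_add_distrib]
      refine Finset.sum_congr rfl fun j _ => ?_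
      simp only [hg]
      rw [smul_add]
  have hy' : ∀ i, i < N → y (i+1) = y i - (γ i / L) • g i := by
    intro i hi
    have h1 := hhs i hi
    have h2 : (γ i / L) • hs (i+1) = y i - (γ i / L) • gradient f (x i) - y (i+1) := by
      rw [h1, smul_smul]
      have : γ i / L * (L / γ i) = 1 := by
        field_simp [hγne i hi]
      rw [this, one_smul]
    have h3 : y (i+1) = y i - (γ i / L) • gradient f (x i) - (γ i / L) • hs (i+1) := by
      rw [h2]; abel
    rw [h3, hg, smul_add]
    abel
  -- ### the z-sequence determined by the span form
  set Z : ℕ → E d := fun k => match k with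
    | 0 => x 0
    | (m+1) => x m - L⁻¹ • g m with hZ
  have hZ0 : Z 0 = x 0 := rfl
  have hZs : ∀ m, Z (m+1) = x m - L⁻¹ • g m := fun m => rfl
  -- ### core algebraic identity
  have hcore : ∀ k, k < N → x (k+1) = Z (k+1) + ((θ k - 1) / θ (k+1)) • (Z (k+1) - Z k)
      + (θ k / θ (k+1)) • (Z (k+1) - x k) := by
    intro k hk
    rcases k with _ | m
    · -- k = 0
      have hx1 := hx' 1 (by omega)
      have hα := hαdiag 0 hk
      rw [hx1, Finset.sum_range_one, hZs, hZ0, hx' 0 (by omega)]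
      simp only [Finset.range_zero, Finset.sum_empty, sub_zero, hα]
      module
    · -- k = m + 1
      simp only [show m + 1 + 1 = m + 2 from rfl]
      have hmN : m < N := by omega
      have hm1N : m + 1 < N := hk
      have e1 := hx' (m+2) (by omega)
      have e2 := hx' (m+1) (by omega)
      have e3 := hx' m (by omega)
      have hθ1 : θ (m+1) ≠ 0 := hθne (m+1) (by omega)
      have hθ2 : θ (m+2) ≠ 0 := hθne (m+2) (by omega)
      -- coefficient identities
      have hA : α (m+2) (m+1) = 1 + (2 * θ (m+1) - 1) / θ (m+2) := hαdiag (m+1) hk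
      have hB : α (m+2) m
          = (1 + (θ (m+1) - 1) / θ (m+2)) * α (m+1) m - (θ (m+1) - 1) / θ (m+2) := by
        have d1 := hstepα (m+1) m (by omega) hk
        have da := hαdiag m hmN
        have e : α (m+2) m = α (m+1) m + (2 * θ m - α (m+1) m) / θ (m+2) := by linarith
        rw [e, da]
        field_simp
        ring
      have hC : ∀ j, j < m → α (m+2) j
          = (1 + (θ (m+1) - 1) / θ (m+2)) * α (m+1) j
            - ((θ (m+1) - 1) / θ (m+2)) * α m j := by
        intro j hj
        have d1 := hstepα (m+1) j (by omega) hk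
        have d2 := hstepα m j hj hmN
        have e : α (m+2) j = α (m+1) j + (2 * θ j - α (m+1) j) / θ (m+2) := by linarith
        have e' : α (m+1) j = α m j + (2 * θ j - α m j) / θ (m+1) := by linarith
        rw [e, e']
        field_simp
        ring
      -- rewrite the top sum
      have hsplit : ∑ j ∈ Finset.range (m+2), (α (m+2) j / L) • g j
          = (1 + (θ (m+1) - 1) / θ (m+2)) • (∑ j ∈ Finset.range m, (α (m+1) j / L) • g j)
            - ((θ (m+1) - 1) / θ (m+2)) • (∑ j ∈ Finset.range m, (α m j / L) • g j)
            + (α (m+2) m / L) • g m + (α (m+2) (m+1) / L) • g (m+1) := by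
        rw [Finset.sum_range_succ, Finset.sum_range_succ]
        congr 2
        rw [Finset.smul_sum, Finset.smul_sum, ← Finset.sum_sub_distrib]
        refine Finset.sum_congr rfl fun j hj => ?_
        rw [hC j (Finset.mem_range.mp hj), smul_smul, smul_smul, ← sub_smul]
        congr 1
        ring
      rw [e1, hsplit, hZs, hZs, e2, Finset.sum_range_succ, e3]
      rw [hA, hB]
      module
  -- ### main induction
  have hLpos : ∀ i, i < N → 0 < γ i / L := fun i hi => div_pos (hγpos i hi) hL
  have main : ∀ k, k ≤ N → x k = xh k ∧ y k = yh k ∧ zh k = Z k := by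
    intro k
    induction k with
    | zero =>
      intro _
      refine ⟨hxh0.symm, ?_, ?_⟩
      · rw [hy0, hyh0]
      · rw [hzh0, hZ0]
    | succ m ih =>
      intro hm1
      have hmN : m < N := by omega
      obtain ⟨hx_eq, hy_eq, hz_eq⟩ := ih (by omega)
      have hyy : y (m+1) = yh (m+1) := by
        have p1 := hyprox m hmN
        have p2 := hyh m hmN
        rw [← hx_eq, ← hy_eq] at p2
        exact isProx_unique h hh _ (hLpos m hmN) _ _ _ p1 p2
      have hzz : zh (m+1) = Z (m+1) := by
        rw [hzh m hmN, ← hx_eq, ← hyy, ← hy_eq, hy' m hmN, hZs]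
        have h4 : y m - (γ m / L) • g m - y m = -((γ m / L) • g m) := by abel
        have h5 : (γ m)⁻¹ * (γ m / L) = L⁻¹ := by
          field_simp [hγne m hmN]
        rw [h4, smul_neg, smul_smul, h5]
        abel
      have hxx : x (m+1) = xh (m+1) := by
        rw [hxh m hmN, hzz, hz_eq, ← hx_eq]
        exact hcore m hmN
      exact ⟨hxx, hyy, hzz⟩
  intro k hk
  exact ⟨(main k hk).1, (main k hk).2.1⟩

end
end

section
/- Let N ≥ 2 and let θ_0,…,θ_N be the OptISTA coefficient sequence. Define α_{i+1,i} = 1 + (2θ_i − 1)/θ_{i+1} and, for j ∈ [0:i−1], α_{i+1,j} = α_{j+1,j} + Σ_{k=j+1}^{i} ( 2θ_j/θ_{k+1} − α_{k,j}/θ_{k+1} ). Then for every j ∈ [0:N−2], the coefficients α_{N,j} satisfy the recurrence ( θ_{j+1}/(2θ_j − 1) ) (α_{N,j} − 1) − 1 = ( (θ_{j+1} − 1)/(2θ_{j+1} − 1) ) (α_{N,j+1} − 1). -/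
open Finset

/-- Lemma 12, recurrence of the last-row stepsizes `α_{N,j}`.
With the OptISTA `θ`-sequence and stepsizes `α` defined by
`α_{i+1,i} = 1 + (2θ_i - 1)/θ_{i+1}` and, for `j < i`,
`α_{i+1,j} = α_{j+1,j} + Σ_{k=j+1}^{i} (2θ_j/θ_{k+1} - α_{k,j}/θ_{k+1})`, one has, for
every `j ∈ [0:N-2]`,
`(θ_{j+1}/(2θ_j - 1)) (α_{N,j} - 1) - 1 = ((θ_{j+1} - 1)/(2θ_{j+1} - 1)) (α_{N,j+1} - 1)`. -/
theorem alpha_recurrence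
    (N : ℕ) (hN : 2 ≤ N)
    (θ : ℕ → ℝ) (hθ0 : θ 0 = 1)
    (hθ : ∀ i, 1 ≤ i → i + 1 ≤ N → θ i = (1 + Real.sqrt (1 + 4 * θ (i - 1) ^ 2)) / 2)
    (hθN : θ N = (1 + Real.sqrt (1 + 8 * θ (N - 1) ^ 2)) / 2)
    (α : ℕ → ℕ → ℝ)
    (hαdiag : ∀ i, i < N → α (i + 1) i = 1 + (2 * θ i - 1) / θ (i + 1))
    (hαrec : ∀ i j, j < i → i < N →
      α (i + 1) j = α (j + 1) j
        + ∑ k ∈ Finset.Icc (j + 1) i, (2 * θ j / θ (k + 1) - α k j / θ (k + 1))) :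
    ∀ j, j + 2 ≤ N →
      θ (j + 1) / (2 * θ j - 1) * (α N j - 1) - 1
        = (θ (j + 1) - 1) / (2 * θ (j + 1) - 1) * (α N (j + 1) - 1) := by
  -- θ is at least 1 everywhere up to N
  have hθ1 : ∀ i, i ≤ N → 1 ≤ θ i := by
    intro i hi
    rcases Nat.eq_zero_or_pos i with h0 | h1
    · simp [h0, hθ0]
    rcases eq_or_lt_of_le hi with rfl | hlt
    · rw [hθN]
      have h2 : Real.sqrt 1 ≤ Real.sqrt (1 + 8 * θ (i - 1) ^ 2) :=
        Real.sqrt_le_sqrt (by nlinarith [sq_nonneg (θ (i - 1))])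
      rw [Real.sqrt_one] at h2; linarith
    · rw [hθ i h1 hlt]
      have h2 : Real.sqrt 1 ≤ Real.sqrt (1 + 4 * θ (i - 1) ^ 2) :=
        Real.sqrt_le_sqrt (by nlinarith [sq_nonneg (θ (i - 1))])
      rw [Real.sqrt_one] at h2; linarith
  have hp : ∀ i, i ≤ N → 0 < θ i := fun i hi => lt_of_lt_of_le one_pos (hθ1 i hi)
  -- quadratic relations
  have hsq : ∀ i, 1 ≤ i → i + 1 ≤ N → θ i ^ 2 = θ i + θ (i - 1) ^ 2 := by
    intro i h1 h2
    have h := hθ i h1 h2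
    have h' : 2 * θ i - 1 = Real.sqrt (1 + 4 * θ (i - 1) ^ 2) := by linarith
    have hs : Real.sqrt (1 + 4 * θ (i - 1) ^ 2) ^ 2 = 1 + 4 * θ (i - 1) ^ 2 :=
      Real.sq_sqrt (by positivity)
    linear_combination (2 * θ i - 1 + Real.sqrt (1 + 4 * θ (i - 1) ^ 2)) / 4 * h'
      + (1 / 4) * hs
  obtain ⟨M, rfl⟩ : ∃ M, N = M + 2 := ⟨N - 2, by omega⟩
  have hsqN : θ (M + 2) ^ 2 = θ (M + 2) + 2 * θ (M + 1) ^ 2 := by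
    have h : θ (M + 2) = (1 + Real.sqrt (1 + 8 * θ (M + 1) ^ 2)) / 2 := hθN
    have h' : 2 * θ (M + 2) - 1 = Real.sqrt (1 + 8 * θ (M + 1) ^ 2) := by linarith
    have hs : Real.sqrt (1 + 8 * θ (M + 1) ^ 2) ^ 2 = 1 + 8 * θ (M + 1) ^ 2 :=
      Real.sq_sqrt (by positivity)
    linear_combination (2 * θ (M + 2) - 1 + Real.sqrt (1 + 8 * θ (M + 1) ^ 2)) / 4 * h'
      + (1 / 4) * hs
  -- one-step recurrence
  have hstep : ∀ i j, j < i → i < M + 2 →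
      α (i + 1) j = α i j + (2 * θ j - α i j) / θ (i + 1) := by
    intro i j hji hiN
    by_cases he : i = j + 1
    · subst he
      have h1 := hαrec (j + 1) j hji hiN
      rw [Finset.Icc_self, Finset.sum_singleton] at h1
      rw [h1]; ring
    · obtain ⟨m, rfl⟩ : ∃ m, i = m + 1 := ⟨i - 1, by omega⟩
      have hjm : j < m := by omega
      have h1 := hαrec (m + 1) j hji hiN
      have h2 := hαrec m j hjm (by omega)
      rw [Finset.sum_Icc_succ_top (by omega : j + 1 ≤ m + 1)] at h1
      rw [h1, h2]; ring
  -- closed form for the last row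
  have key : ∀ j, j + 2 ≤ M + 2 → α (M + 2) j * θ (M + 2) ^ 2
      = 2 * θ j * θ (M + 2) ^ 2 - 2 * (2 * θ j - 1) * (θ (j + 1) - 1) * θ (j + 1) := by
    intro j hj
    have hcf : ∀ i, j + 1 ≤ i → i ≤ M + 1 →
        α i j * θ i ^ 2 = 2 * θ j * θ i ^ 2 - (2 * θ j - 1) * (θ (j + 1) - 1) * θ (j + 1) := by
      intro i hi1
      induction i, hi1 using Nat.le_induction with
      | base =>
        intro _
        have ht : θ (j + 1) ≠ 0 := ne_of_gt (hp (j + 1) (by omega))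
        rw [hαdiag j (by omega)]
        field_simp
        ring
      | succ n hn ih =>
        intro hle
        have hPn := ih (by omega)
        have hst := hstep n j (by omega) (by omega)
        have hsqn : θ (n + 1) ^ 2 = θ (n + 1) + θ n ^ 2 := by
          have h := hsq (n + 1) (by omega) (by omega)
          simpa using h
        have ht1 : θ (n + 1) ≠ 0 := ne_of_gt (hp (n + 1) (by omega))
        have hdiv : (2 * θ j - α n j) / θ (n + 1) * θ (n + 1) ^ 2
            = (2 * θ j - α n j) * θ (n + 1) := by
          field_simp
        rw [hst, add_mul, hdiv]
        linear_combination hPn + (α n j - 2 * θ j) * hsqn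
    have hst := hstep (M + 1) j (by omega) (by omega)
    have hPn := hcf (M + 1) (by omega) le_rfl
    have ht : θ (M + 2) ≠ 0 := ne_of_gt (hp (M + 2) le_rfl)
    have hdiv : (2 * θ j - α (M + 1) j) / θ (M + 1 + 1) * θ (M + 2) ^ 2
        = (2 * θ j - α (M + 1) j) * θ (M + 2) := by
      show (2 * θ j - α (M + 1) j) / θ (M + 2) * θ (M + 2) ^ 2 = _
      field_simp
    rw [show M + 1 + 1 = M + 2 from rfl] at hst
    rw [hst, add_mul]
    rw [show M + 1 + 1 = M + 2 from rfl] at hdiv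
    rw [hdiv]
    linear_combination 2 * hPn + (α (M + 1) j - 2 * θ j) * hsqN
  intro j hj
  have ht : θ (M + 2) ≠ 0 := ne_of_gt (hp (M + 2) le_rfl)
  have hA := key j hj
  have hB : α (M + 2) (j + 1) * θ (M + 2) ^ 2
      = 2 * θ (j + 1) * θ (M + 2) ^ 2 - 2 * (2 * θ (j + 1) - 1) * θ (j + 1) ^ 2 := by
    by_cases hcase : j + 1 = M + 1
    · have hjM : j = M := by omega
      subst hjM
      have hd := hαdiag (j + 1) (by omega)
      rw [show j + 1 + 1 = j + 2 from rfl] at hd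
      rw [hd, add_mul, one_mul]
      have hdiv : (2 * θ (j + 1) - 1) / θ (j + 2) * θ (j + 2) ^ 2
          = (2 * θ (j + 1) - 1) * θ (j + 2) := by
        field_simp
      rw [hdiv]
      linear_combination (1 - 2 * θ (j + 1)) * hsqN
    · have hB' := key (j + 1) (by omega)
      have hsq2 : θ (j + 2) ^ 2 = θ (j + 2) + θ (j + 1) ^ 2 := by
        have h := hsq (j + 2) (by omega) (by omega)
        simpa using h
      rw [show j + 1 + 1 = j + 2 from rfl] at hB'
      linear_combination hB' + 2 * (1 - 2 * θ (j + 1)) * hsq2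
  have hs1 : (2 : ℝ) * θ j - 1 ≠ 0 := by
    have := hθ1 j (by omega); intro h; nlinarith
  have hs2 : (2 : ℝ) * θ (j + 1) - 1 ≠ 0 := by
    have := hθ1 (j + 1) (by omega); intro h; nlinarith
  have ha : α (M + 2) j = 2 * θ j
      - 2 * (2 * θ j - 1) * (θ (j + 1) - 1) * θ (j + 1) / θ (M + 2) ^ 2 := by
    field_simp
    linear_combination hA
  have hb : α (M + 2) (j + 1) = 2 * θ (j + 1)
      - 2 * (2 * θ (j + 1) - 1) * θ (j + 1) ^ 2 / θ (M + 2) ^ 2 := by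
    field_simp
    linear_combination hB
  rw [ha, hb]
  rw [div_mul_eq_mul_div (θ (j + 1) - 1) (2 * θ (j + 1) - 1), eq_div_iff hs2]
  field_simp
  ring
end

section
/- Let N ≥ 1, R > 0, and let θ_0,…,θ_N be the OptISTA coefficient sequence. Define σ_i = 2θ_i/θ_N² for i ∈ [0:N−1] and σ_N = 1/θ_N; ζ_{N+1} = (θ_N − 1)R² / ( θ_N² (2θ_N − 1) ), ζ_N = ( θ_N/(θ_N − 1) ) ζ_{N+1}, and ζ_i = ( 2θ_i/(2θ_i − 1) ) ζ_{i+1} for i ∈ [0:N−1]; and a_i = ( 1/(θ_N² − 1) ) · ζ_i / ( σ_i √(ζ_i − ζ_{i+1}) ) for i ∈ [0:N]. Then 2 a_{j+1}² θ_{j+1} − 2 a_j² θ_j + a_j² ≤ 0 for all j ∈ [0:N−2], and a_N² θ_N − 2 a_{N−1}² θ_{N−1} + a_{N−1}² ≤ 0. (In fact both left-hand sides equal zero.) -/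
open Finset

/-- Lemma 20, sufficient inequalities of the composite lower-bound
construction.
With the OptISTA `θ`-sequence, `σ_i = 2θ_i/θ_N²` for `i ∈ [0:N-1]`, `σ_N = 1/θ_N`,
`ζ_{N+1} = (θ_N - 1) R²/(θ_N² (2θ_N - 1))`, `ζ_N = (θ_N/(θ_N - 1)) ζ_{N+1}`,
`ζ_i = (2θ_i/(2θ_i - 1)) ζ_{i+1}`, and
`a_i = (1/(θ_N² - 1)) ζ_i/(σ_i √(ζ_i - ζ_{i+1}))`, one has
`2 a_{j+1}² θ_{j+1} - 2 a_j² θ_j + a_j² ≤ 0` for `j ∈ [0:N-2]` and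
`a_N² θ_N - 2 a_{N-1}² θ_{N-1} + a_{N-1}² ≤ 0`. -/
theorem a_sequence_inequalities
    (N : ℕ) (hN : 1 ≤ N) (R : ℝ) (hR : 0 < R)
    (θ : ℕ → ℝ) (hθ0 : θ 0 = 1)
    (hθ : ∀ i, 1 ≤ i → i + 1 ≤ N → θ i = (1 + Real.sqrt (1 + 4 * θ (i - 1) ^ 2)) / 2)
    (hθN : θ N = (1 + Real.sqrt (1 + 8 * θ (N - 1) ^ 2)) / 2)
    (σ : ℕ → ℝ)
    (hσ : ∀ i, i < N → σ i = 2 * θ i / (θ N) ^ 2)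
    (hσN : σ N = 1 / θ N)
    (ζ : ℕ → ℝ)
    (hζN1 : ζ (N + 1) = (θ N - 1) * R ^ 2 / ((θ N) ^ 2 * (2 * θ N - 1)))
    (hζN : ζ N = θ N / (θ N - 1) * ζ (N + 1))
    (hζ : ∀ i, i < N → ζ i = 2 * θ i / (2 * θ i - 1) * ζ (i + 1))
    (a : ℕ → ℝ)
    (ha : ∀ i, i ≤ N →
      a i = 1 / ((θ N) ^ 2 - 1) * (ζ i / (σ i * Real.sqrt (ζ i - ζ (i + 1))))) :
    (∀ j, j + 2 ≤ N →
      2 * (a (j + 1)) ^ 2 * θ (j + 1) - 2 * (a j) ^ 2 * θ j + (a j) ^ 2 ≤ 0) ∧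
    (a N) ^ 2 * θ N - 2 * (a (N - 1)) ^ 2 * θ (N - 1) + (a (N - 1)) ^ 2 ≤ 0 := by
  -- θ values are at least 1
  have sqrt1le : ∀ x : ℝ, 1 ≤ x → 1 ≤ Real.sqrt x := by
    intro x hx
    rw [show (1:ℝ) = Real.sqrt 1 from Real.sqrt_one.symm]
    exact Real.sqrt_le_sqrt hx
  have hθ1 : ∀ i, i ≤ N → 1 ≤ θ i := by
    intro i hi
    rcases Nat.eq_zero_or_pos i with h0 | h1
    · rw [h0, hθ0]
    · rcases eq_or_lt_of_le hi with hiN | hiN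
      · subst hiN
        rw [hθN]
        have := sqrt1le (1 + 8 * θ (i - 1) ^ 2) (by nlinarith [sq_nonneg (θ (i-1))])
        linarith
      · rw [hθ i h1 hiN]
        have := sqrt1le (1 + 4 * θ (i - 1) ^ 2) (by nlinarith [sq_nonneg (θ (i-1))])
        linarith
  have hθN2 : 2 ≤ θ N := by
    have h1 : 1 ≤ θ (N - 1) := hθ1 _ (by omega)
    have h9 : (3:ℝ) ≤ Real.sqrt (1 + 8 * θ (N - 1) ^ 2) := by
      rw [show (3:ℝ) = Real.sqrt 9 by
        rw [show (9:ℝ) = 3 ^ 2 by norm_num, Real.sqrt_sq (by norm_num)]]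
      exact Real.sqrt_le_sqrt (by nlinarith)
    rw [hθN]; linarith
  have hθNpos : (0:ℝ) < θ N := by linarith
  have hθN1 : (0:ℝ) < θ N - 1 := by linarith
  have hθNsq : (0:ℝ) < θ N ^ 2 - 1 := by nlinarith
  -- ζ positivity
  have hzN1 : 0 < ζ (N + 1) := by
    rw [hζN1]
    apply div_pos (by positivity)
    apply mul_pos (by positivity)
    linarith
  have hzN : 0 < ζ N := by
    rw [hζN]
    exact mul_pos (div_pos hθNpos hθN1) hzN1
  have hζpos : ∀ i, i ≤ N + 1 → 0 < ζ i := by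
    have key : ∀ k, ∀ i, i ≤ N + 1 → N + 1 - i ≤ k → 0 < ζ i := by
      intro k
      induction k with
      | zero =>
        intro i hi hk
        have : i = N + 1 := by omega
        rw [this]; exact hzN1
      | succ k ih =>
        intro i hi hk
        rcases Nat.lt_or_ge i N with hiN | hiN
        · have hθi : 1 ≤ θ i := hθ1 i (le_of_lt hiN)
          rw [hζ i hiN]
          apply mul_pos
          · apply div_pos (by linarith) (by linarith)
          · exact ih (i + 1) (by omega) (by omega)
        · rcases Nat.eq_or_lt_of_le hiN with h | h
          · rw [← h]; exact hzN
          · have : i = N + 1 := by omega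
            rw [this]; exact hzN1
    intro i hi
    exact key (N + 1) i hi (by omega)
  -- difference formulas
  have hdiff : ∀ i, i < N → ζ i - ζ (i + 1) = ζ i / (2 * θ i) := by
    intro i hi
    have hθi : 1 ≤ θ i := hθ1 i (le_of_lt hi)
    have h := hζ i hi
    have h2 : (2 * θ i - 1) ≠ 0 := by linarith
    field_simp at h ⊢
    nlinarith [h]
  have hdiffN : ζ N - ζ (N + 1) = ζ N / θ N := by
    have h := hζN
    field_simp at h ⊢
    nlinarith [h]
  set C : ℝ := θ N ^ 4 / (θ N ^ 2 - 1) ^ 2 with hC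
  -- squared a formulas
  have sqform : ∀ i, i < N → a i ^ 2 = C * (ζ i - ζ (i + 1)) := by
    intro i hi
    have hθi : 1 ≤ θ i := hθ1 i (le_of_lt hi)
    have hzi : 0 < ζ i := hζpos i (by omega)
    have hd : 0 < ζ i - ζ (i + 1) := by
      rw [hdiff i hi]; positivity
    have hs : Real.sqrt (ζ i - ζ (i + 1)) ^ 2 = ζ i - ζ (i + 1) :=
      Real.sq_sqrt hd.le
    rw [ha i (le_of_lt hi), mul_pow, div_pow, div_pow, mul_pow, hs, hσ i hi,
      hdiff i hi, hC]
    have hθi0 : θ i ≠ 0 := by linarith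
    field_simp
  have twoform : ∀ i, i < N → 2 * a i ^ 2 * θ i = C * ζ i := by
    intro i hi
    have hθi : 1 ≤ θ i := hθ1 i (le_of_lt hi)
    rw [sqform i hi, hdiff i hi]
    field_simp
  have keyN : a N ^ 2 * θ N = C * ζ N := by
    have hzNp : 0 < ζ N := hzN
    have hd : 0 < ζ N - ζ (N + 1) := by rw [hdiffN]; positivity
    have hs : Real.sqrt (ζ N - ζ (N + 1)) ^ 2 = ζ N - ζ (N + 1) :=
      Real.sq_sqrt hd.le
    rw [ha N le_rfl, mul_pow, div_pow, div_pow, mul_pow, hs, hσN, hdiffN, hC]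
    have hθN0 : θ N ≠ 0 := ne_of_gt hθNpos
    field_simp
  constructor
  · intro j hj
    have h1 : j < N := by omega
    have h2 : j + 1 < N := by omega
    rw [twoform (j + 1) h2, twoform j h1, sqform j h1]
    have : C * ζ (j + 1) - C * ζ j + C * (ζ j - ζ (j + 1)) = 0 := by ring
    linarith
  · have h1 : N - 1 < N := by omega
    have h2 : N - 1 + 1 = N := by omega
    rw [keyN, twoform (N - 1) h1, sqform (N - 1) h1, h2]
    have : C * ζ N - C * ζ (N - 1) + C * (ζ (N - 1) - ζ N) = 0 := by ring
    linarith
end
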